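/- arXiv:2401.12398 — 2 statements merged into one kernel-verified Lean document; each statement's English description precedes it below -/
import Mathlib

section
/- Let (Z, d) be a compact symmetric premetric space satisfying the quasi-triangle inequality with constant N ≥ 1 and admitting a Vitali covering constant N₀ (i.e., every finite family of balls has a disjoint subfamily whose N₀-enlarged balls cover the union). Suppose ν is a Borel probability measure on Z and C ≥ 1 is such that ν(B(ξ, r)) ≥ C⁻¹·r for all ξ ∈ Z and all 0 < r < diam(Z). Then the 1-dimensional Hausdorff measure of Z with respect to d is finite: H¹(Z) ≤ 2N·N₀·C. -/
open Set MeasureTheory ENNReal NNReal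

/-- Ball of a premetric. -/
def pball {Z : Type*} (d : Z → Z → ℝ) (x : Z) (r : ℝ) : Set Z := {y | d x y < r}

/-- Diameter of a set with respect to a premetric, valued in `ℝ≥0∞`. -/
noncomputable def ediam {Z : Type*} (d : Z → Z → ℝ) (U : Set Z) : ℝ≥0∞ :=
  ⨆ x ∈ U, ⨆ y ∈ U, ENNReal.ofReal (d x y)

/-- `s`-dimensional Hausdorff measure of a set with respect to a premetric,
defined via covers: `H^s(B) = lim_{ε→0} inf { Σ (diam Uᵢ)^s : B ⊆ ⋃ Uᵢ, diam Uᵢ ≤ ε }`. -/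
noncomputable def hMeas {Z : Type*} (d : Z → Z → ℝ) (s : ℝ) (B : Set Z) : ℝ≥0∞ :=
  ⨆ (ε : ℝ≥0∞) (_ : 0 < ε), ⨅ (U : ℕ → Set Z) (_ : B ⊆ ⋃ i, U i)
    (_ : ∀ i, ediam d (U i) ≤ ε), ∑' i, ediam d (U i) ^ s

/-- Hausdorff dimension of a set with respect to a premetric:
`inf { s > 0 : H^s = 0 }`. -/
noncomputable def hdim {Z : Type*} (d : Z → Z → ℝ) (B : Set Z) : ℝ :=
  sInf {s : ℝ | 0 < s ∧ hMeas d s B = 0}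

/-- Finiteness of the one-dimensional Hausdorff measure: a compact symmetric
premetric space with quasi-triangle constant `N` and Vitali covering constant
`N₀`, carrying a Borel probability measure with lower ball bounds
`ν(B(ξ,r)) ≥ C⁻¹ r` for `0 < r < diam Z`, satisfies `H¹(Z) ≤ 2 N N₀ C`. -/
theorem stmt3 {Z : Type*} [TopologicalSpace Z] [CompactSpace Z]
    [MeasurableSpace Z] [BorelSpace Z]
    (d : Z → Z → ℝ) (N N₀ C : ℝ) (hN : 1 ≤ N) (hN₀ : 1 ≤ N₀) (hC : 1 ≤ C)
    (hcont : Continuous fun p : Z × Z => d p.1 p.2)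
    (hnonneg : ∀ x y, 0 ≤ d x y)
    (hzero : ∀ x y, d x y = 0 ↔ x = y)
    (hsymm : ∀ x y, d x y = d y x)
    (htri : ∀ x y z, d x z ≤ N * (d x y + d y z))
    (hvitali : ∀ (n : ℕ) (ξ : Fin n → Z) (r : Fin n → ℝ),
      ∃ t : Finset (Fin n),
        ((t : Set (Fin n)).Pairwise fun i j =>
          Disjoint (pball d (ξ i) (r i)) (pball d (ξ j) (r j))) ∧
        (⋃ i, pball d (ξ i) (r i)) ⊆ ⋃ i ∈ t, pball d (ξ i) (N₀ * r i))
    (ν : Measure Z) [IsProbabilityMeasure ν]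
    (hlower : ∀ (ξ : Z) (r : ℝ), 0 < r → ENNReal.ofReal r < ediam d Set.univ →
      ENNReal.ofReal (C⁻¹ * r) ≤ ν (pball d ξ r)) :
    hMeas d 1 Set.univ ≤ ENNReal.ofReal (2 * N * N₀ * C) := by
  have hNpos : (0:ℝ) < N := lt_of_lt_of_le one_pos hN
  have hN₀pos : (0:ℝ) < N₀ := lt_of_lt_of_le one_pos hN₀
  have hCpos : (0:ℝ) < C := lt_of_lt_of_le one_pos hC
  have hopen : ∀ (x : Z) (r : ℝ), IsOpen (pball d x r) := by
    intro x r
    have hc : Continuous fun y => d x y :=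
      hcont.comp (continuous_const.prodMk continuous_id)
    exact isOpen_Iio.preimage hc
  rw [hMeas]
  refine iSup₂_le fun ε hε => ?_
  obtain ⟨ε₀, hε₀pos, hε₀le⟩ : ∃ ε₀ : ℝ, 0 < ε₀ ∧ ENNReal.ofReal ε₀ ≤ ε := by
    rcases eq_or_ne ε ⊤ with h | h
    · exact ⟨1, one_pos, by simp [h]⟩
    · exact ⟨ε.toReal, ENNReal.toReal_pos hε.ne' h, by rw [ENNReal.ofReal_toReal h]⟩
  by_cases hD : ediam d (Set.univ : Set Z) = 0
  · -- degenerate case: diameter zero, cover by `univ`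
    refine le_trans (iInf_le_of_le (fun _ => Set.univ)
      (iInf_le_of_le (fun z _ => Set.mem_iUnion.mpr ⟨0, trivial⟩) (iInf_le _ ?_))) ?_
    · intro i; rw [hD]; exact zero_le
    · simp [hD, ENNReal.zero_rpow_of_pos one_pos]
  · have hDpos : 0 < ediam d (Set.univ : Set Z) := pos_iff_ne_zero.mpr hD
    obtain ⟨ρ, -, hρ0, hρD⟩ := ENNReal.lt_iff_exists_real_btwn.mp hDpos
    have hρpos : 0 < ρ := ENNReal.ofReal_pos.mp hρ0
    set r₀ : ℝ := min ρ (ε₀ / (2 * N * N₀)) with hr₀def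
    have hr₀pos : 0 < r₀ := lt_min hρpos (div_pos hε₀pos (by positivity))
    have h2 : 2 * N * N₀ * r₀ ≤ ε₀ := by
      have := min_le_right ρ (ε₀ / (2 * N * N₀))
      rw [le_div_iff₀ (by positivity : (0:ℝ) < 2 * N * N₀)] at this
      linarith
    have hr₀D : ENNReal.ofReal r₀ < ediam d (Set.univ : Set Z) :=
      lt_of_le_of_lt (ENNReal.ofReal_le_ofReal (min_le_left _ _)) hρD
    -- finite subcover by balls of radius r₀
    obtain ⟨F, hF⟩ := isCompact_univ.elim_finite_subcover
      (fun ξ : Z => pball d ξ r₀) (fun ξ => hopen ξ r₀)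
      (fun z _ => Set.mem_iUnion.mpr ⟨z, show d z z < r₀ by
        rw [(hzero z z).mpr rfl]; exact hr₀pos⟩)
    set n := F.card with hn
    set e : Fin n → Z := fun i => (F.equivFin.symm i : Z) with he
    have hcov' : (Set.univ : Set Z) ⊆ ⋃ i, pball d (e i) r₀ := by
      intro z hz
      obtain ⟨ξ, hξF, hzξ⟩ := Set.mem_iUnion₂.mp (hF hz)
      refine Set.mem_iUnion.mpr ⟨F.equivFin ⟨ξ, hξF⟩, ?_⟩
      simpa [he, Equiv.symm_apply_apply] using hzξ
    obtain ⟨t, hdisj, htcov⟩ := hvitali n e (fun _ => r₀)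
    -- the cover by enlarged balls
    set U : ℕ → Set Z := fun k =>
      if h : k < n then
        (if (⟨k, h⟩ : Fin n) ∈ t then pball d (e ⟨k, h⟩) (N₀ * r₀) else ∅)
      else ∅ with hUdef
    have hUcov : (Set.univ : Set Z) ⊆ ⋃ k, U k := by
      intro z hz
      obtain ⟨i, hit, hzi⟩ := Set.mem_iUnion₂.mp (htcov (hcov' hz))
      refine Set.mem_iUnion.mpr ⟨i.1, ?_⟩
      have hi : (⟨i.1, i.isLt⟩ : Fin n) = i := Fin.eta i i.isLt
      simp only [hUdef, dif_pos i.isLt, hi, if_pos hit]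
      exact hzi
    have hball : ∀ ξ : Z, ediam d (pball d ξ (N₀ * r₀)) ≤
        ENNReal.ofReal (2 * N * N₀ * r₀) := by
      intro ξ
      refine iSup₂_le fun x hx => iSup₂_le fun y hy => ENNReal.ofReal_le_ofReal ?_
      have hx' : d ξ x < N₀ * r₀ := hx
      have hy' : d ξ y < N₀ * r₀ := hy
      calc d x y ≤ N * (d x ξ + d ξ y) := htri x ξ y
        _ = N * (d ξ x + d ξ y) := by rw [hsymm x ξ]
        _ ≤ N * (N₀ * r₀ + N₀ * r₀) := by nlinarith
        _ = 2 * N * N₀ * r₀ := by ring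
    have hempty : ediam d (∅ : Set Z) = 0 := by simp [ediam]
    have hUball : ∀ k, ediam d (U k) ≤ ENNReal.ofReal (2 * N * N₀ * r₀) := by
      intro k
      simp only [hUdef]
      split
      · split
        · exact hball _
        · rw [hempty]; exact zero_le
      · rw [hempty]; exact zero_le
    have hUε : ∀ k, ediam d (U k) ≤ ε := fun k =>
      le_trans (hUball k) (le_trans (ENNReal.ofReal_le_ofReal h2) hε₀le)
    -- cardinality bound via the measure
    have hmeaseq : ν (⋃ i ∈ t, pball d (e i) r₀) = ∑ i ∈ t, ν (pball d (e i) r₀) :=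
      measure_biUnion_finset hdisj (fun i _ => (hopen _ _).measurableSet)
    have hsum_le_one : ∑ i ∈ t, ν (pball d (e i) r₀) ≤ 1 := by
      rw [← hmeaseq]
      calc ν (⋃ i ∈ t, pball d (e i) r₀) ≤ ν Set.univ := measure_mono (Set.subset_univ _)
        _ = 1 := measure_univ
    have hlow : ∀ i : Fin n, ENNReal.ofReal (C⁻¹ * r₀) ≤ ν (pball d (e i) r₀) :=
      fun i => hlower (e i) r₀ hr₀pos hr₀D
    have hcard : (t.card : ℝ≥0∞) * ENNReal.ofReal (C⁻¹ * r₀) ≤ 1 := by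
      have h1 : t.card • ENNReal.ofReal (C⁻¹ * r₀) ≤ ∑ i ∈ t, ν (pball d (e i) r₀) :=
        Finset.card_nsmul_le_sum t _ _ (fun i _ => hlow i)
      rw [nsmul_eq_mul] at h1
      exact le_trans h1 hsum_le_one
    -- sum of diameters bound
    set S : Finset ℕ := t.image Fin.val with hSdef
    have hoff : ∀ k ∉ S, ediam d (U k) ^ (1:ℝ) = 0 := by
      intro k hk
      have hUk : U k = ∅ := by
        simp only [hUdef]
        split
        · rename_i h
          rw [if_neg]
          intro hmem
          exact hk (Finset.mem_image.mpr ⟨⟨k, h⟩, hmem, rfl⟩)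
        · rfl
      rw [hUk, hempty, ENNReal.zero_rpow_of_pos one_pos]
    have hsum : ∑' k, ediam d (U k) ^ (1:ℝ) ≤
        (t.card : ℝ≥0∞) * ENNReal.ofReal (2 * N * N₀ * r₀) := by
      rw [tsum_eq_sum hoff]
      have hle : ∀ k ∈ S, ediam d (U k) ^ (1:ℝ) ≤ ENNReal.ofReal (2 * N * N₀ * r₀) := by
        intro k _
        rw [ENNReal.rpow_one]
        exact hUball k
      calc ∑ k ∈ S, ediam d (U k) ^ (1:ℝ)
          ≤ S.card • ENNReal.ofReal (2 * N * N₀ * r₀) :=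
            Finset.sum_le_card_nsmul S _ _ hle
        _ = (t.card : ℝ≥0∞) * ENNReal.ofReal (2 * N * N₀ * r₀) := by
            rw [nsmul_eq_mul, hSdef, Finset.card_image_of_injective t Fin.val_injective]
    have hfinal : (t.card : ℝ≥0∞) * ENNReal.ofReal (2 * N * N₀ * r₀) ≤
        ENNReal.ofReal (2 * N * N₀ * C) := by
      have heq : ENNReal.ofReal (2 * N * N₀ * r₀) =
          ENNReal.ofReal (C⁻¹ * r₀) * ENNReal.ofReal (2 * N * N₀ * C) := by
        rw [← ENNReal.ofReal_mul (by positivity)]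
        congr 1
        field_simp
      calc (t.card : ℝ≥0∞) * ENNReal.ofReal (2 * N * N₀ * r₀)
          = ((t.card : ℝ≥0∞) * ENNReal.ofReal (C⁻¹ * r₀)) * ENNReal.ofReal (2 * N * N₀ * C) := by
            rw [heq]; ring
        _ ≤ 1 * ENNReal.ofReal (2 * N * N₀ * C) := mul_le_mul_left hcard _
        _ = ENNReal.ofReal (2 * N * N₀ * C) := one_mul _
    exact le_trans (iInf_le_of_le U (iInf_le_of_le hUcov (iInf_le _ hUε)))
      (le_trans hsum hfinal)
end

section
/- Let (a_n) and (b_n) be sequences of positive real numbers, and suppose the series s ↦ Σₙ e^{-s·aₙ} and s ↦ Σₙ e^{-s·bₙ} have abscissae of convergence δ₁, δ₂ ∈ (0, ∞) respectively. Then for any p, q > 0, the abscissa of convergence δ of the series s ↦ Σₙ e^{-s·(p·aₙ + q·bₙ)} satisfies δ ≤ (p/δ₁ + q/δ₂)^{-1}. -/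
/-- `δ` is the abscissa of convergence of the series `s ↦ Σₙ exp (-s cₙ)`:
the series converges for every `s > δ` and diverges for every `0 < s < δ`. -/
def IsAbscissa (c : ℕ → ℝ) (δ : ℝ) : Prop :=
  (∀ s : ℝ, δ < s → Summable fun n => Real.exp (-s * c n)) ∧
  (∀ s : ℝ, 0 < s → s < δ → ¬ Summable fun n => Real.exp (-s * c n))

/-- For positive sequences with abscissae `δ₁, δ₂ ∈ (0,∞)` and `p, q > 0`, the
abscissa of convergence `δ` of `s ↦ Σₙ exp(-s (p aₙ + q bₙ))` satisfies
`δ ≤ (p/δ₁ + q/δ₂)⁻¹`. -/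
theorem stmt9 (a b : ℕ → ℝ) (ha : ∀ n, 0 < a n) (hb : ∀ n, 0 < b n)
    (δ₁ δ₂ : ℝ) (hδ₁ : 0 < δ₁) (hδ₂ : 0 < δ₂)
    (haδ : IsAbscissa a δ₁) (hbδ : IsAbscissa b δ₂)
    (p q : ℝ) (hp : 0 < p) (hq : 0 < q)
    (δ : ℝ) (hδ : IsAbscissa (fun n => p * a n + q * b n) δ) :
    δ ≤ (p / δ₁ + q / δ₂)⁻¹ := by
  set K : ℝ := p / δ₁ + q / δ₂ with hK
  have hKpos : 0 < K := by positivity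
  -- key: for every s > K⁻¹ the combined series converges
  have key : ∀ s : ℝ, K⁻¹ < s → Summable fun n => Real.exp (-s * (p * a n + q * b n)) := by
    intro s hs
    have hs0 : 0 < s := lt_trans (by positivity) hs
    have hsK : 1 < s * K := by
      have := mul_lt_mul_of_pos_right hs hKpos
      rwa [inv_mul_cancel₀ hKpos.ne'] at this
    set θ : ℝ := (p / δ₁) / K with hθ
    have hθpos : 0 < θ := by positivity
    have hθ1 : θ + (q / δ₂) / K = 1 := by
      rw [hθ, hK]; field_simp
    have hθ2pos : 0 < (q / δ₂) / K := by positivity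
    -- summability of the two majorant series
    have hsum1 : Summable fun n => θ * Real.exp (-(s * K * δ₁) * a n) := by
      apply Summable.mul_left
      exact haδ.1 _ (by nlinarith)
    have hsum2 : Summable fun n => ((q / δ₂) / K) * Real.exp (-(s * K * δ₂) * b n) := by
      apply Summable.mul_left
      exact hbδ.1 _ (by nlinarith)
    apply Summable.of_nonneg_of_le (fun n => (Real.exp_pos _).le)
      (fun n => ?_) (hsum1.add hsum2)
    have heq : Real.exp (-s * (p * a n + q * b n)) =
        Real.exp (-(s * K * δ₁) * a n) ^ θ * Real.exp (-(s * K * δ₂) * b n) ^ ((q / δ₂) / K) := by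
      rw [← Real.exp_mul, ← Real.exp_mul, ← Real.exp_add]
      congr 1
      have h1 : (0:ℝ) < δ₁ := hδ₁
      have h2 : (0:ℝ) < δ₂ := hδ₂
      field_simp [hθ]
      have hKθ : K * δ₁ * θ = p := by rw [hθ]; field_simp
      linear_combination (a n) * hKθ
    rw [heq]
    exact Real.geom_mean_le_arith_mean2_weighted hθpos.le hθ2pos.le
      (Real.exp_pos _).le (Real.exp_pos _).le hθ1
  by_contra h
  push_neg at h
  set s : ℝ := (K⁻¹ + δ) / 2 with hsdef
  have h1 : K⁻¹ < s := by simp only [hsdef]; linarith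
  have h2 : s < δ := by simp only [hsdef]; linarith
  have h0 : 0 < s := lt_trans (by positivity) h1
  exact hδ.2 s h0 h2 (key s h1)
end
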